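/- Let A be a finite-dimensional semisimple algebra with chain of semisimple subalgebras A₀ = ℂ ⊆ A₁ ⊆ … ⊆ A_n = A, and suppose every irreducible A_k-module restricts to A_{k-1} multiplicity-freely. Then the Gelfand–Tsetlin algebra GZ_n, generated by the centers Z(A₁), …, Z(A_n), is a maximal commutative subalgebra of A_n. -/

import Mathlib

set_option linter.unusedSectionVars false

noncomputable section GZaux

variable {B : Type} [Ring B] [Algebra ℂ B]

/-- Right multiplication as a `B`-linear endomorphism of `B`. -/
def rmulGZ (b : B) : B →ₗ[B] B where
  toFun x := x * b
  map_add' x y := add_mul x y b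
  map_smul' r x := by simp [smul_eq_mul, mul_assoc]

@[simp] lemma rmulGZ_apply (b x : B) : rmulGZ b x = x * b := rfl

/-- An idempotent with scalar corner generates a simple left ideal. -/
lemma simple_of_corner [IsSemisimpleRing B] {p : B} (hid : p * p = p) (hp0 : p ≠ 0)
    (hc : ∀ r : B, ∃ c : ℂ, p * r * p = c • p) :
    IsSimpleModule B ↥(LinearMap.range (rmulGZ p)) := by
  set L : Submodule B B := LinearMap.range (rmulGZ p) with hL
  have hpL : p ∈ L := ⟨p, by simp [hid]⟩
  set phat : ↥L := ⟨p, hpL⟩ with hphat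
  have hphat0 : phat ≠ 0 := by
    intro h
    apply hp0
    simpa [hphat] using congrArg Subtype.val h
  have hgen : ∀ x : ↥L, ∃ r : B, r • phat = x := by
    rintro ⟨x, r, rfl⟩
    exact ⟨r, Subtype.ext rfl⟩
  haveI : Nontrivial (↥L) := ⟨⟨phat, 0, hphat0⟩⟩
  refine (isSimpleModule_iff B _).mpr ⟨fun W => ?_⟩
  obtain ⟨W', hW'⟩ := exists_isCompl W
  set e : ↥L →ₗ[B] ↥L := W.subtype ∘ₗ Submodule.projectionOnto W W' hW' with he
  -- the key scalar
  have hy : ∃ c : ℂ, ∀ x : ↥L, (e x : B) = c • (x : B) := by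
    have hyval : (e phat : B) ∈ L := (e phat).2
    obtain ⟨s, hs⟩ := hyval
    have hpe : e phat = p • e phat := by
      have h0 : phat = p • phat := by
        apply Subtype.ext
        simp [hphat, smul_eq_mul, hid]
      conv_lhs => rw [h0, map_smul]
    have hval : (e phat : B) = p * s * p := by
      have h1 : (e phat : B) = p * (e phat : B) := by
        conv_lhs => rw [hpe]
        simp [smul_eq_mul]
      rw [h1]
      rw [show ((e phat : B)) = s * p from hs.symm]
      simp [mul_assoc]
    obtain ⟨c, hcs⟩ := hc s
    have hep : (e phat : B) = c • p := by rw [hval, hcs]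
    refine ⟨c, fun x => ?_⟩
    obtain ⟨r, rfl⟩ := hgen x
    rw [map_smul]
    have : ((r • e phat : ↥L) : B) = r • ((e phat : B)) := rfl
    rw [this, hep]
    have : ((r • phat : ↥L) : B) = r * p := rfl
    rw [this]
    simp [smul_eq_mul, mul_smul_comm]
  obtain ⟨c, hcx⟩ := hy
  have hee : ∀ x : ↥L, e (e x) = e x := by
    intro x
    simp only [he, LinearMap.comp_apply]
    congr 1
    simpa using Submodule.projectionOnto_apply_left hW'
      ((Submodule.projectionOnto W W' hW') x)
  have hcc : c = 0 ∨ c = 1 := by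
    have h2 := hcx (e phat)
    rw [hee phat, hcx phat, smul_smul] at h2
    have h4 : (c - c * c) • (p : B) = 0 := by
      rw [sub_smul, h2]
      exact sub_self _
    rcases smul_eq_zero.mp h4 with h | h
    · have : c * (1 - c) = 0 := by ring_nf; linear_combination h
      rcases mul_eq_zero.mp this with h' | h'
      · exact Or.inl h'
      · right; linear_combination -h'
    · exact absurd h hp0
  rcases hcc with hc0 | hc1
  · -- c = 0 : e = 0, so W = ⊥
    left
    rw [eq_bot_iff]
    rintro w hw
    have h1 : e w = w := by
      simp only [he, LinearMap.comp_apply]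
      have := Submodule.projectionOnto_apply_left hW' ⟨w, hw⟩
      simp only [Submodule.coe_subtype] at this ⊢
      rw [this]
    have h2 : (w : B) = 0 := by
      have := hcx w
      rw [h1, hc0, zero_smul] at this
      exact this
    simpa using Subtype.ext h2
  · -- c = 1 : e = id, so W = ⊤
    right
    rw [eq_top_iff]
    rintro x -
    have h1 : (e x : B) = (x : B) := by rw [hcx x, hc1, one_smul]
    have h2 : e x = x := Subtype.ext h1
    rw [← h2]
    simp only [he, LinearMap.comp_apply]
    exact (Submodule.projectionOnto W W' hW' x).2

end GZaux

section keyfix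

variable {B : Type} [Ring B] [Algebra ℂ B] {R : Type} [Ring R] [Algebra ℂ R]

/-- Key lemma: if `p₀` is a corner-scalar idempotent of `R` and `M` is a simple `B`-module
whose simple `R`-submodules are multiplicity-free, then the `φ p₀`-fixed vectors of `M`
form a space of dimension at most 1. -/
lemma keyfix (φ : R →ₐ[ℂ] B) {p₀ : R} (hid : p₀ * p₀ = p₀)
    (hc : ∀ r : R, ∃ c : ℂ, p₀ * r * p₀ = c • p₀)
    (hsimp : IsSimpleModule R ↥(LinearMap.range (rmulGZ p₀)))
    (M : Type) [AddCommGroup M] [Module B M]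
    (hmf' : letI : Module R M := Module.compHom M φ.toRingHom
      ∀ N₁ N₂ : Submodule R M, IsSimpleModule R N₁ → IsSimpleModule R N₂ →
        Nonempty (N₁ ≃ₗ[R] N₂) → N₁ = N₂)
    (t₁ t₂ : M) (h₁ : φ p₀ • t₁ = t₁) (h₂ : φ p₀ • t₂ = t₂) (ht : t₁ ≠ 0) :
    ∃ c : ℂ, t₂ = algebraMap ℂ B c • t₁ := by
  letI : Module R M := Module.compHom M φ.toRingHom
  have hsm : ∀ (r : R) (m : M), r • m = φ r • m := fun _ _ => rfl
  by_cases ht2 : t₂ = 0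
  · exact ⟨0, by simp [ht2]⟩
  set L₀ : Submodule R R := LinearMap.range (rmulGZ p₀) with hL₀
  have hpL : p₀ ∈ L₀ := ⟨p₀, by simp [hid]⟩
  set phat : ↥L₀ := ⟨p₀, hpL⟩ with hphat
  -- the evaluation maps
  have mkpsi : ∀ t : M, ∃ ψ : ↥L₀ →ₗ[R] M, ∀ x : ↥L₀, ψ x = (x : R) • t := by
    intro t
    have hadd : ∀ x y : ↥L₀, ((x + y : ↥L₀) : R) • t = (x : R) • t + (y : R) • t := by
      intro x y
      rw [Submodule.coe_add, add_smul]
    have hsmul : ∀ (r : R) (x : ↥L₀), ((r • x : ↥L₀) : R) • t = r • ((x : R) • t) := by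
      intro r x
      have h' : ((r • x : ↥L₀) : R) = r * (x : R) := rfl
      rw [h', mul_smul]
    exact ⟨LinearMap.mk (AddHom.mk (fun x => (x : R) • t) hadd) hsmul, fun x => rfl⟩
  obtain ⟨ψ₁, hψ₁⟩ := mkpsi t₁
  obtain ⟨ψ₂, hψ₂⟩ := mkpsi t₂
  have hfix : ∀ t : M, φ p₀ • t = t → p₀ • t = t := fun t h => by rw [hsm]; exact h
  have hψ₁p : ψ₁ phat = t₁ := by rw [hψ₁]; exact hfix t₁ h₁
  have hψ₂p : ψ₂ phat = t₂ := by rw [hψ₂]; exact hfix t₂ h₂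
  haveI : IsSimpleModule R ↥L₀ := hsimp
  have inj : ∀ (ψ : ↥L₀ →ₗ[R] M) (t : M), t ≠ 0 → ψ phat = t → Function.Injective ψ := by
    intro ψ t ht0 hψp
    rcases LinearMap.injective_or_eq_zero ψ with h | h
    · exact h
    · exfalso
      apply ht0
      rw [← hψp, h]
      rfl
  have inj₁ := inj ψ₁ t₁ ht hψ₁p
  have inj₂ := inj ψ₂ t₂ ht2 hψ₂p
  set N₁ := LinearMap.range ψ₁ with hN₁
  set N₂ := LinearMap.range ψ₂ with hN₂
  have e₁ : ↥L₀ ≃ₗ[R] ↥N₁ := LinearEquiv.ofInjective ψ₁ inj₁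
  have e₂ : ↥L₀ ≃ₗ[R] ↥N₂ := LinearEquiv.ofInjective ψ₂ inj₂
  haveI hsN₁ : IsSimpleModule R ↥N₁ := IsSimpleModule.congr e₁.symm
  haveI hsN₂ : IsSimpleModule R ↥N₂ := IsSimpleModule.congr e₂.symm
  have hNeq : N₁ = N₂ := hmf' N₁ N₂ hsN₁ hsN₂ ⟨e₁.symm.trans e₂⟩
  have ht₂N₁ : t₂ ∈ N₁ := by rw [hNeq]; exact ⟨phat, hψ₂p⟩
  obtain ⟨x, hx⟩ := ht₂N₁
  obtain ⟨r, hr⟩ := x.2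
  have hxval : (x : R) = r * p₀ := by rw [← hr]; rfl
  have ht2' : t₂ = ((p₀ * r) * p₀) • t₁ := by
    have e1 : t₂ = (x : R) • t₁ := by rw [← hx, hψ₁]
    have e2 : t₂ = p₀ • t₂ := (hfix t₂ h₂).symm
    rw [e2, e1, hxval, ← mul_smul, ← mul_assoc]
  obtain ⟨c, hcr⟩ := hc r
  refine ⟨c, ?_⟩
  rw [ht2', hcr, hsm, map_smul, Algebra.smul_def, mul_smul]
  rw [show φ p₀ • t₁ = t₁ from h₁]

end keyfix

section subL

variable {B : Type} [Ring B] {M : Type} [AddCommGroup M] [Module B M]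

lemma simple_iso_of_le_finsup (t : Finset (Submodule B M))
    (hN : ∀ N ∈ t, IsSimpleModule B ↥N) (S : Submodule B M) (hS : IsSimpleModule B ↥S)
    (hle : S ≤ t.sup id) : ∃ N ∈ t, Nonempty (↥S ≃ₗ[B] ↥N) := by
  classical
  induction t using Finset.induction_on generalizing S with
  | empty =>
    exfalso
    simp only [Finset.sup_empty, le_bot_iff] at hle
    subst hle
    exact (isSimpleModule_iff_isAtom.mp hS).1 rfl
  | @insert N t hNt ih =>
    haveI : IsSimpleModule B ↥S := hS
    haveI hNs : IsSimpleModule B ↥N := hN N (Finset.mem_insert_self N t)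
    set Y : Submodule B M := t.sup id with hY
    have hle' : S ≤ N ⊔ Y := by
      simpa [Finset.sup_insert] using hle
    set f : ↥S →ₗ[B] M ⧸ Y := Y.mkQ.comp S.subtype with hf
    rcases LinearMap.injective_or_eq_zero f with hfin | hf0
    swap
    · -- f = 0 : S ≤ Y
      have hSY : S ≤ Y := by
        intro x hx
        have : f ⟨x, hx⟩ = 0 := by rw [hf0]; rfl
        simpa [hf, Submodule.Quotient.mk_eq_zero] using this
      obtain ⟨N', hN', hiso⟩ := ih (fun N'' h => hN N'' (Finset.mem_insert_of_mem h)) S hS hSY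
      exact ⟨N', Finset.mem_insert_of_mem hN', hiso⟩
    · set g : ↥N →ₗ[B] M ⧸ Y := Y.mkQ.comp N.subtype with hg
      rcases LinearMap.injective_or_eq_zero g with hgin | hg0
      swap
      · -- g = 0 : N ≤ Y hence S ≤ Y
        have hNY : N ≤ Y := by
          intro x hx
          have : g ⟨x, hx⟩ = 0 := by rw [hg0]; rfl
          simpa [hg, Submodule.Quotient.mk_eq_zero] using this
        have hSY : S ≤ Y := le_trans hle' (sup_le hNY le_rfl)
        obtain ⟨N', hN', hiso⟩ := ih (fun N'' h => hN N'' (Finset.mem_insert_of_mem h)) S hS hSY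
        exact ⟨N', Finset.mem_insert_of_mem hN', hiso⟩
      · -- both injective: range f = range g
        have hrange : LinearMap.range f ≤ LinearMap.range g := by
          rintro - ⟨⟨x, hx⟩, rfl⟩
          have hx' : x ∈ N ⊔ Y := hle' hx
          rw [Submodule.mem_sup] at hx'
          obtain ⟨a, ha, b, hb, hab⟩ := hx'
          refine ⟨⟨a, ha⟩, ?_⟩
          simp only [hg, hf, LinearMap.comp_apply, Submodule.coe_subtype]
          rw [← hab]
          rw [Submodule.mkQ_apply, Submodule.mkQ_apply, Submodule.Quotient.eq]
          simpa using hb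
        have hFs : IsSimpleModule B ↥(LinearMap.range f) :=
          IsSimpleModule.congr (LinearEquiv.ofInjective f hfin).symm
        have hGs : IsSimpleModule B ↥(LinearMap.range g) :=
          IsSimpleModule.congr (LinearEquiv.ofInjective g hgin).symm
        have hFG : LinearMap.range f = LinearMap.range g := by
          have hFa := isSimpleModule_iff_isAtom.mp hFs
          have hGa := isSimpleModule_iff_isAtom.mp hGs
          rcases lt_or_eq_of_le hrange with h | h
          · exact absurd (hGa.2 _ h) hFa.1
          · exact h
        refine ⟨N, Finset.mem_insert_self N t, ⟨?_⟩⟩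
        exact (LinearEquiv.ofInjective f hfin).trans
          ((LinearEquiv.ofEq _ _ hFG).trans (LinearEquiv.ofInjective g hgin).symm)

lemma simple_iso_of_le_sSup (𝒩 : Set (Submodule B M))
    (hN : ∀ N ∈ 𝒩, IsSimpleModule B ↥N) (S : Submodule B M) (hS : IsSimpleModule B ↥S)
    (hle : S ≤ sSup 𝒩) : ∃ N ∈ 𝒩, Nonempty (↥S ≃ₗ[B] ↥N) := by
  classical
  -- S is a compact element since it is generated by one element
  haveI := hS
  haveI : Nontrivial ↥S := IsSimpleModule.nontrivial B ↥S
  obtain ⟨⟨x, hxS⟩, hx0⟩ := exists_ne (0 : ↥S)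
  have hxne : x ≠ 0 := fun h => hx0 (Subtype.ext h)
  have hspan : Submodule.span B {x} = S := by
    have hle1 : Submodule.span B {x} ≤ S := by
      simpa [Submodule.span_le] using hxS
    have hat := isSimpleModule_iff_isAtom.mp hS
    rcases lt_or_eq_of_le hle1 with h | h
    · exfalso
      have hbot := hat.2 _ h
      have : x ∈ (⊥ : Submodule B M) := hbot ▸ Submodule.mem_span_singleton_self x
      exact hxne (by simpa using this)
    · exact h
  have hfg : S.FG := ⟨{x}, by simpa using hspan⟩
  have hcpt := (Submodule.fg_iff_compact S).mp hfg
  rw [CompleteLattice.isCompactElement_iff_exists_le_iSup_of_le_iSup] at hcpt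
  rw [sSup_eq_iSup'] at hle
  obtain ⟨t, ht⟩ := hcpt 𝒩 Subtype.val hle
  have htsup : t.sup Subtype.val = (t.image Subtype.val).sup id := by
    rw [Finset.sup_image]
    rfl
  obtain ⟨N, hNmem, hiso⟩ := simple_iso_of_le_finsup (t.image Subtype.val)
    (by
      intro N hNmem
      simp only [Finset.mem_image] at hNmem
      obtain ⟨⟨N', hN'⟩, -, rfl⟩ := hNmem
      exact hN N' hN') S hS (by rw [← htsup]; exact ht)
  simp only [Finset.mem_image] at hNmem
  obtain ⟨⟨N', hN'⟩, -, rfl⟩ := hNmem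
  exact ⟨N', hN', hiso⟩

end subL

section zfam

variable {B : Type} [Ring B] [Algebra ℂ B]

/-- `z` supports only one isomorphism class of simple submodules. -/
def ZisoGZ (z : B) : Prop :=
  ∀ S₁ S₂ : Submodule B B, IsSimpleModule B ↥S₁ → IsSimpleModule B ↥S₂ →
    (∀ x ∈ S₁, z * x = x) → (∀ x ∈ S₂, z * x = x) → Nonempty (↥S₁ ≃ₗ[B] ↥S₂)

lemma zfam_aux [IsSemisimpleRing B] [FiniteDimensional ℂ B] :
    ∀ (d : ℕ) (u : B), (∀ b, u * b = b * u) → u * u = u →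
    Module.finrank ℂ ↥((LinearMap.range (rmulGZ u)).restrictScalars ℂ) ≤ d →
    ∃ (m : ℕ) (z : Fin m → B),
      (∀ j, ∀ b, z j * b = b * z j) ∧ (∀ j, z j * z j = z j) ∧
      (∀ j, z j * u = z j) ∧ (∀ j j', j ≠ j' → z j * z j' = 0) ∧
      ((∑ j, z j) = u) ∧ (∀ j, ZisoGZ (z j)) := by
  intro d
  induction d with
  | zero =>
    intro u hucen huid hrank
    have h0 : u = 0 := by
      have hrank0 : Module.finrank ℂ ↥((LinearMap.range (rmulGZ u)).restrictScalars ℂ) = 0 :=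
        Nat.le_zero.mp hrank
      have hbot : (LinearMap.range (rmulGZ u)).restrictScalars ℂ = ⊥ :=
        Submodule.finrank_eq_zero.mp hrank0
      have hu : u ∈ (LinearMap.range (rmulGZ u)).restrictScalars ℂ := ⟨1, one_mul u⟩
      rw [hbot] at hu
      simpa using hu
    exact ⟨0, fun j => j.elim0, fun j => j.elim0, fun j => j.elim0, fun j => j.elim0,
      fun j => j.elim0, by simp [h0], fun j => j.elim0⟩
  | succ d ih =>
    intro u hucen huid hrank
    by_cases hu0 : u = 0
    · exact ⟨0, fun j => j.elim0, fun j => j.elim0, fun j => j.elim0, fun j => j.elim0,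
        fun j => j.elim0, by simp [hu0], fun j => j.elim0⟩
    set Bu : Submodule B B := LinearMap.range (rmulGZ u) with hBu
    have huBu : u ∈ Bu := ⟨1, one_mul u⟩
    have hBu_mul : ∀ x ∈ Bu, x * u = x := by
      rintro x ⟨y, rfl⟩
      simp [mul_assoc, huid]
    have hBu_stab : ∀ x ∈ Bu, ∀ b, x * b ∈ Bu := by
      rintro x ⟨y, rfl⟩ b
      refine ⟨y * b, ?_⟩
      simp only [rmulGZ_apply]
      rw [mul_assoc, mul_assoc, ← hucen b]
    rcases IsSemisimpleModule.eq_bot_or_exists_simple_le Bu with hbot | ⟨T, hTle, hTsimple⟩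
    · exfalso
      apply hu0
      rw [hbot] at huBu
      simpa using huBu
    classical
    -- the two isotypic pieces
    set QI : Submodule B B → Prop := fun N => Nonempty (↥N ≃ₗ[B] ↥T) with hQI
    set SI : Set (Submodule B B) := {N | N ≤ Bu ∧ IsSimpleModule B ↥N ∧ QI N} with hSI
    set SJ : Set (Submodule B B) := {N | N ≤ Bu ∧ IsSimpleModule B ↥N ∧ ¬ QI N} with hSJ
    set I : Submodule B B := sSup SI with hI
    set J : Submodule B B := sSup SJ with hJ
    -- right-stability of each piece
    have hstab : ∀ (𝒩 : Set (Submodule B B)), (∀ N ∈ 𝒩, N ≤ Bu ∧ IsSimpleModule B ↥N) →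
        (∀ N N' : Submodule B B, N ∈ 𝒩 → N' ≤ Bu → IsSimpleModule B ↥N' →
          Nonempty (↥N' ≃ₗ[B] ↥N) → N' ∈ 𝒩) →
        ∀ x ∈ sSup 𝒩, ∀ b, x * b ∈ sSup 𝒩 := by
      intro 𝒩 h𝒩 hiso x hx b
      have hmap : Submodule.map (rmulGZ b) (sSup 𝒩) ≤ sSup 𝒩 := by
        conv_lhs => rw [sSup_eq_iSup', Submodule.map_iSup]
        refine iSup_le ?_
        rintro ⟨N, hN⟩
        haveI hNsimp : IsSimpleModule B ↥N := (h𝒩 N hN).2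
        set ρ : ↥N →ₗ[B] B := (rmulGZ b) ∘ₗ N.subtype with hρ
        have hrange : Submodule.map (rmulGZ b) N = LinearMap.range ρ := by
          rw [hρ, LinearMap.range_comp, Submodule.range_subtype]
        rcases LinearMap.injective_or_eq_zero ρ with hinj | h0
        · have hsimp' : IsSimpleModule B ↥(LinearMap.range ρ) :=
            IsSimpleModule.congr (LinearEquiv.ofInjective ρ hinj).symm
          have hle' : LinearMap.range ρ ≤ Bu := by
            rintro - ⟨⟨x', hx'⟩, rfl⟩
            exact hBu_stab x' ((h𝒩 N hN).1 hx') b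
          have hmem : LinearMap.range ρ ∈ 𝒩 :=
            hiso N _ hN hle' hsimp' ⟨(LinearEquiv.ofInjective ρ hinj).symm⟩
          rw [hrange]
          exact le_sSup hmem
        · rw [hrange, h0]
          simp
      exact hmap ⟨x, hx, rfl⟩
    have hSIstab : ∀ x ∈ I, ∀ b, x * b ∈ I := by
      refine hstab SI (fun N hN => ⟨hN.1, hN.2.1⟩) ?_
      rintro N N' hN hle' hsimp' ⟨e⟩
      exact ⟨hle', hsimp', ⟨e.trans (hN.2.2.some)⟩⟩
    have hSJstab : ∀ x ∈ J, ∀ b, x * b ∈ J := by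
      refine hstab SJ (fun N hN => ⟨hN.1, hN.2.1⟩) ?_
      rintro N N' hN hle' hsimp' ⟨e⟩
      refine ⟨hle', hsimp', fun ⟨e'⟩ => hN.2.2 ⟨e.symm.trans e'⟩⟩
    have hIle : I ≤ Bu := sSup_le (fun N hN => hN.1)
    have hJle : J ≤ Bu := sSup_le (fun N hN => hN.1)
    -- disjointness
    have hIJ : I ⊓ J = ⊥ := by
      by_contra hne
      rcases IsSemisimpleModule.eq_bot_or_exists_simple_le (I ⊓ J) with h | ⟨S, hSle, hSsimp⟩
      · exact hne h
      obtain ⟨N₁, hN₁, ⟨e₁⟩⟩ := simple_iso_of_le_sSup SI (fun N hN => hN.2.1) S hSsimp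
        (le_trans hSle inf_le_left)
      obtain ⟨N₂, hN₂, ⟨e₂⟩⟩ := simple_iso_of_le_sSup SJ (fun N hN => hN.2.1) S hSsimp
        (le_trans hSle inf_le_right)
      exact hN₂.2.2 ⟨e₂.symm.trans (e₁.trans hN₁.2.2.some)⟩
    -- sup
    have hsup : I ⊔ J = Bu := by
      apply le_antisymm (sup_le hIle hJle)
      conv_lhs => rw [← IsSemisimpleModule.sSup_simples_le Bu]
      refine sSup_le ?_
      rintro N ⟨hNsimp, hNle⟩
      by_cases hQ : QI N
      · exact le_trans (le_sSup (show N ∈ SI from ⟨hNle, hNsimp, hQ⟩)) le_sup_left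
      · exact le_trans (le_sSup (show N ∈ SJ from ⟨hNle, hNsimp, hQ⟩)) le_sup_right
    -- decompose u
    have humem : u ∈ I ⊔ J := hsup.symm ▸ huBu
    rw [Submodule.mem_sup] at humem
    obtain ⟨z, hz, w, hw, hzw⟩ := humem
    have hzu : z * u = z := hBu_mul z (hIle hz)
    have hwu : w * u = w := hBu_mul w (hJle hw)
    have hzw0 : z * w = 0 := by
      have h1 : z * w ∈ I := hSIstab z hz w
      have h2 : z * w ∈ J := J.smul_mem z hw
      have : z * w ∈ I ⊓ J := ⟨h1, h2⟩
      rw [hIJ] at this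
      simpa using this
    have hwz0 : w * z = 0 := by
      have h1 : w * z ∈ J := hSJstab w hw z
      have h2 : w * z ∈ I := I.smul_mem w hz
      have : w * z ∈ I ⊓ J := ⟨h2, h1⟩
      rw [hIJ] at this
      simpa using this
    have hzid : z * z = z := by
      have h := mul_add z z w
      rw [hzw0, add_zero, hzw, hzu] at h
      exact h.symm
    have hwid : w * w = w := by
      have h := mul_add w z w
      rw [hwz0, zero_add, hzw, hwu] at h
      exact h.symm
    have hzcen : ∀ b, z * b = b * z := by
      intro b
      have hu' : (z + w) * b = b * (z + w) := by rw [hzw]; exact hucen b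
      have hexp : z * b + w * b = b * z + b * w := by
        rw [← add_mul, ← mul_add]
        exact hu'
      have hdiff : z * b - b * z = b * w - w * b := by
        rw [sub_eq_sub_iff_add_eq_add, hexp, add_comm]
      have hmemI : z * b - b * z ∈ I := Submodule.sub_mem I (hSIstab z hz b) (I.smul_mem b hz)
      have hmemJ : b * w - w * b ∈ J := Submodule.sub_mem J (J.smul_mem b hw) (hSJstab w hw b)
      have hmem : z * b - b * z ∈ I ⊓ J := ⟨hmemI, hdiff ▸ hmemJ⟩
      rw [hIJ] at hmem
      have h0 := (Submodule.mem_bot B).mp hmem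
      rw [sub_eq_zero] at h0
      exact h0
    have hweq : w = u - z := by rw [← hzw]; abel
    have hwcen : ∀ b, w * b = b * w := by
      intro b
      rw [hweq, sub_mul, mul_sub, hucen b, hzcen b]
    -- z ≠ 0
    have hTI : T ≤ I := le_sSup (show T ∈ SI from ⟨hTle, hTsimple, ⟨LinearEquiv.refl B ↥T⟩⟩)
    have hIz : ∀ x ∈ I, x * z = x := by
      intro x hx
      have hxu : x * u = x := hBu_mul x (hIle hx)
      have hxw : x * w ∈ I ⊓ J := ⟨hSIstab x hx w, J.smul_mem x hw⟩
      rw [hIJ] at hxw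
      have hxw0 : x * w = 0 := by simpa using hxw
      have h := mul_add x z w
      rw [hxw0, add_zero, hzw, hxu] at h
      exact h.symm
    have hz0 : z ≠ 0 := by
      intro h0
      have : T = ⊥ := by
        rw [eq_bot_iff]
        intro x hx
        have := hIz x (hTI hx)
        rw [h0, mul_zero] at this
        simpa using this.symm
      exact (isSimpleModule_iff_isAtom.mp hTsimple).1 this
    -- Ziso z
    have hZiso : ZisoGZ z := by
      intro S₁ S₂ hS₁ hS₂ hfix₁ hfix₂
      have hle₁ : S₁ ≤ I := by
        intro x hx
        rw [← hfix₁ x hx]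
        exact hSIstab z hz x
      have hle₂ : S₂ ≤ I := by
        intro x hx
        rw [← hfix₂ x hx]
        exact hSIstab z hz x
      obtain ⟨N₁, hN₁, ⟨e₁⟩⟩ := simple_iso_of_le_sSup SI (fun N hN => hN.2.1) S₁ hS₁ hle₁
      obtain ⟨N₂, hN₂, ⟨e₂⟩⟩ := simple_iso_of_le_sSup SI (fun N hN => hN.2.1) S₂ hS₂ hle₂
      exact ⟨(e₁.trans hN₁.2.2.some).trans ((e₂.trans hN₂.2.2.some).symm)⟩
    -- recursion on w
    have hBwle : LinearMap.range (rmulGZ w) ≤ Bu := by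
      rintro - ⟨y, rfl⟩
      simp only [rmulGZ_apply]
      rw [← hwu, ← mul_assoc]
      exact ⟨y * w, rfl⟩
    have hzBu : z ∈ Bu := ⟨z, hzu⟩
    have hznotBw : z ∉ LinearMap.range (rmulGZ w) := by
      rintro ⟨y, hy⟩
      simp only [rmulGZ_apply] at hy
      apply hz0
      have h2 : z * w = z := by
        rw [← hy, mul_assoc, hwid]
      rw [← h2, hzw0]
    have hlt : LinearMap.range (rmulGZ w) < Bu := lt_of_le_of_ne hBwle (by
      intro h
      rw [h] at hznotBw
      exact hznotBw hzBu)
    have hrankw : Module.finrank ℂ ↥((LinearMap.range (rmulGZ w)).restrictScalars ℂ) ≤ d := by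
      have hltr : (LinearMap.range (rmulGZ w)).restrictScalars ℂ < Bu.restrictScalars ℂ :=
        (Submodule.restrictScalarsEmbedding ℂ B B).strictMono hlt
      have := Submodule.finrank_lt_finrank_of_lt hltr
      omega
    obtain ⟨m, zs, hcen', hid', hw', horth', hsum', hZiso'⟩ := ih w hwcen hwid hrankw
    -- assemble
    refine ⟨m + 1, Fin.cons z zs, ?_, ?_, ?_, ?_, ?_, ?_⟩
    · intro j b
      refine Fin.cases ?_ ?_ j
      · exact hzcen b
      · intro j'; exact hcen' j' b
    · intro j
      refine Fin.cases ?_ ?_ j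
      · exact hzid
      · intro j'; exact hid' j'
    · intro j
      refine Fin.cases ?_ ?_ j
      · exact hzu
      · intro j'
        have := hw' j'
        calc zs j' * u = zs j' * w * u := by rw [this]
        _ = zs j' * (w * u) := by rw [mul_assoc]
        _ = zs j' * w := by rw [hwu]
        _ = zs j' := this
    · intro j j' hjj'
      rcases Fin.eq_zero_or_eq_succ j with rfl | ⟨i, rfl⟩ <;>
        rcases Fin.eq_zero_or_eq_succ j' with rfl | ⟨i', rfl⟩
      · exact absurd rfl hjj'
      · simp only [Fin.cons_zero, Fin.cons_succ]
        calc z * zs i' = z * (zs i' * w) := by rw [hw' i']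
        _ = z * (w * zs i') := by rw [hcen' i' w]
        _ = z * w * zs i' := by rw [mul_assoc]
        _ = 0 := by rw [hzw0, zero_mul]
      · simp only [Fin.cons_zero, Fin.cons_succ]
        calc zs i * z = zs i * w * z := by rw [hw' i]
        _ = zs i * (w * z) := by rw [mul_assoc]
        _ = 0 := by rw [hwz0, mul_zero]
      · simp only [Fin.cons_succ]
        refine horth' i i' ?_
        intro h
        exact hjj' (by rw [h])
    · rw [Fin.sum_cons, hsum', hzw]
    · intro j
      refine Fin.cases ?_ ?_ j
      · exact hZiso
      · intro j'; exact hZiso' j'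

lemma zfam [IsSemisimpleRing B] [FiniteDimensional ℂ B] :
    ∃ (m : ℕ) (z : Fin m → B),
      (∀ j, ∀ b, z j * b = b * z j) ∧ (∀ j, z j * z j = z j) ∧
      (∀ j j', j ≠ j' → z j * z j' = 0) ∧
      ((∑ j, z j) = 1) ∧ (∀ j, ZisoGZ (z j)) := by
  obtain ⟨m, z, hcen, hid, -, horth, hsum, hZ⟩ := zfam_aux
    (Module.finrank ℂ ↥((LinearMap.range (rmulGZ (1 : B))).restrictScalars ℂ))
    (1 : B) (fun b => by rw [one_mul, mul_one]) (one_mul 1) le_rfl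
  exact ⟨m, z, hcen, hid, horth, hsum, hZ⟩

end zfam

section crux

variable {B : Type} [Ring B] [Algebra ℂ B] {R : Type} [Ring R] [Algebra ℂ R]

lemma crux [IsSemisimpleRing B] [IsSemisimpleRing R] (φ : R →ₐ[ℂ] B) {p₀ : R}
    (hid : p₀ * p₀ = p₀) (hc : ∀ r : R, ∃ c : ℂ, p₀ * r * p₀ = c • p₀)
    (hmf' : ∀ (M : Type) [AddCommGroup M] [Module B M], IsSimpleModule B M →
      letI : Module R M := Module.compHom M φ.toRingHom
      ∀ N₁ N₂ : Submodule R M, IsSimpleModule R N₁ → IsSimpleModule R N₂ →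
        Nonempty (N₁ ≃ₗ[R] N₂) → N₁ = N₂)
    {z : B} (hzc : ∀ b, z * b = b * z) (hzid : z * z = z) (hziso : ZisoGZ z)
    (b : B) : ∃ c : ℂ, (φ p₀ * z) * b * (φ p₀ * z) = c • (φ p₀ * z) := by
  set p : B := φ p₀ with hp
  set q : B := p * z with hq
  have hpp : p * p = p := by rw [hp, ← map_mul, hid]
  have hpq : p * q = q := by rw [hq, ← mul_assoc, hpp]
  have hzq : z * q = q := by
    calc z * (p * z) = z * p * z := (mul_assoc z p z).symm
    _ = p * z * z := by rw [hzc p]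
    _ = p * (z * z) := mul_assoc p z z
    _ = p * z := by rw [hzid]
  by_cases hq0 : q = 0
  · exact ⟨0, by simp [hq0]⟩
  have hp₀0 : p₀ ≠ 0 := by
    intro h
    apply hq0
    rw [hq, hp, h, map_zero, zero_mul]
  have hsimp : IsSimpleModule R ↥(LinearMap.range (rmulGZ p₀)) :=
    simple_of_corner hid hp₀0 hc
  set V : Submodule B B := LinearMap.range (rmulGZ q) with hV
  have hqV : q ∈ V := ⟨1, one_mul q⟩
  set qhat : ↥V := ⟨q, hqV⟩ with hqhat
  have hqhat0 : qhat ≠ 0 := fun h => hq0 (by simpa [hqhat] using congrArg Subtype.val h)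
  have hgen : ∀ x : ↥V, ∃ b' : B, b' • qhat = x := by
    rintro ⟨x, y, rfl⟩
    exact ⟨y, Subtype.ext rfl⟩
  have hzfixV : ∀ x ∈ V, z * x = x := by
    rintro - ⟨y, rfl⟩
    simp only [rmulGZ_apply]
    calc z * (y * q) = z * y * q := (mul_assoc z y q).symm
    _ = y * z * q := by rw [hzc y]
    _ = y * (z * q) := mul_assoc y z q
    _ = y * q := by rw [hzq]
  have hpact : p • qhat = qhat := by
    apply Subtype.ext
    show p • q = q
    rw [smul_eq_mul, hpq]
  haveI hVsimple : IsSimpleModule B ↥V := by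
    haveI : Nontrivial ↥V := ⟨⟨qhat, 0, hqhat0⟩⟩
    refine (isSimpleModule_iff B _).mpr ⟨fun W => ?_⟩
    by_contra hcon
    push_neg at hcon
    obtain ⟨hWbot, hWtop⟩ := hcon
    obtain ⟨W', hW'⟩ := exists_isCompl W
    have hW'bot : W' ≠ ⊥ := by
      intro h
      apply hWtop
      have := codisjoint_iff.mp hW'.codisjoint
      rw [h, sup_bot_eq] at this
      exact this
    obtain ⟨S₁, hS₁le, hS₁⟩ := (IsSemisimpleModule.eq_bot_or_exists_simple_le W).resolve_left hWbot
    obtain ⟨S₂, hS₂le, hS₂⟩ :=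
      (IsSemisimpleModule.eq_bot_or_exists_simple_le W').resolve_left hW'bot
    haveI := hS₁
    haveI := hS₂
    -- transport to submodules of B and apply hziso
    have hinj : Function.Injective V.subtype := Subtype.val_injective
    set S₁b : Submodule B B := Submodule.map V.subtype S₁ with hS₁b
    set S₂b : Submodule B B := Submodule.map V.subtype S₂ with hS₂b
    have e₁b : ↥S₁ ≃ₗ[B] ↥S₁b := Submodule.equivMapOfInjective V.subtype hinj S₁
    have e₂b : ↥S₂ ≃ₗ[B] ↥S₂b := Submodule.equivMapOfInjective V.subtype hinj S₂
    have hS₁bs : IsSimpleModule B ↥S₁b := IsSimpleModule.congr e₁b.symm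
    have hS₂bs : IsSimpleModule B ↥S₂b := IsSimpleModule.congr e₂b.symm
    have hfix₁ : ∀ x ∈ S₁b, z * x = x := by
      rintro - ⟨x, -, rfl⟩
      exact hzfixV _ x.2
    have hfix₂ : ∀ x ∈ S₂b, z * x = x := by
      rintro - ⟨x, -, rfl⟩
      exact hzfixV _ x.2
    obtain ⟨e⟩ := hziso S₁b S₂b hS₁bs hS₂bs hfix₁ hfix₂
    set iso21 : ↥S₂ ≃ₗ[B] ↥S₁ := (e₂b.trans e.symm).trans e₁b.symm with hiso21
    -- complements
    obtain ⟨U₁, hU₁⟩ := exists_isCompl S₁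
    obtain ⟨X, hX⟩ := exists_isCompl (S₁ ⊔ S₂)
    have hdisj12 : S₁ ⊓ S₂ = ⊥ := by
      have h1 : S₁ ⊓ S₂ ≤ W ⊓ W' := inf_le_inf hS₁le hS₂le
      rw [disjoint_iff.mp hW'.disjoint] at h1
      exact le_bot_iff.mp h1
    have hU₂ : IsCompl S₂ (S₁ ⊔ X) := by
      constructor
      · rw [disjoint_iff]
        have h1 : (S₁ ⊔ X) ⊓ (S₁ ⊔ S₂) = S₁ := by
          rw [sup_inf_assoc_of_le X le_sup_left]
          have hXd : X ⊓ (S₁ ⊔ S₂) = ⊥ := disjoint_iff.mp hX.disjoint.symm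
          rw [hXd, sup_bot_eq]
        have h2 : S₂ ⊓ (S₁ ⊔ X) ≤ S₁ ⊓ S₂ := by
          refine le_inf ?_ inf_le_left
          calc S₂ ⊓ (S₁ ⊔ X) ≤ (S₁ ⊔ S₂) ⊓ (S₁ ⊔ X) := inf_le_inf_right _ le_sup_right
          _ = (S₁ ⊔ X) ⊓ (S₁ ⊔ S₂) := inf_comm _ _
          _ = S₁ := h1
        rw [hdisj12] at h2
        exact le_bot_iff.mp h2
      · rw [codisjoint_iff]
        calc S₂ ⊔ (S₁ ⊔ X) = (S₂ ⊔ S₁) ⊔ X := (sup_assoc S₂ S₁ X).symm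
        _ = (S₁ ⊔ S₂) ⊔ X := by rw [sup_comm S₂ S₁]
        _ = ⊤ := codisjoint_iff.mp hX.codisjoint
    -- projections
    set π₁ : ↥V →ₗ[B] ↥S₁ := Submodule.projectionOnto S₁ U₁ hU₁ with hπ₁
    set π₂ : ↥V →ₗ[B] ↥S₂ := Submodule.projectionOnto S₂ (S₁ ⊔ X) hU₂ with hπ₂
    set f₂ : ↥V →ₗ[B] ↥S₁ := iso21.toLinearMap ∘ₗ π₂ with hf₂
    set t₁ : ↥S₁ := π₁ qhat with ht₁
    set t₂ : ↥S₁ := f₂ qhat with ht₂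
    have ht₁fix : φ p₀ • t₁ = t₁ := by
      rw [ht₁, ← map_smul]
      rw [show φ p₀ • qhat = qhat from hpact]
    have ht₂fix : φ p₀ • t₂ = t₂ := by
      rw [ht₂, ← map_smul]
      rw [show φ p₀ • qhat = qhat from hpact]
    -- nonzero witnesses
    haveI : Nontrivial ↥S₁ := IsSimpleModule.nontrivial B ↥S₁
    haveI : Nontrivial ↥S₂ := IsSimpleModule.nontrivial B ↥S₂
    obtain ⟨s₁, hs₁0⟩ := exists_ne (0 : ↥S₁)
    obtain ⟨s₂, hs₂0⟩ := exists_ne (0 : ↥S₂)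
    have hπ₁s₁ : π₁ ↑s₁ = s₁ := Submodule.projectionOnto_apply_left hU₁ s₁
    have hπ₂s₂ : π₂ ↑s₂ = s₂ := Submodule.projectionOnto_apply_left hU₂ s₂
    have hπ₂s₁ : π₂ ↑s₁ = 0 :=
      Submodule.projectionOnto_apply_of_mem_right hU₂ (Submodule.mem_sup_left s₁.2)
    have ht₁0 : t₁ ≠ 0 := by
      intro h0
      apply hs₁0
      have hall : ∀ x : ↥V, π₁ x = 0 := by
        intro x
        obtain ⟨b', rfl⟩ := hgen x
        rw [map_smul, ← ht₁, h0, smul_zero]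
      rw [← hπ₁s₁, hall]
    have ht₂0 : t₂ ≠ 0 := by
      intro h0
      apply hs₂0
      have hall : ∀ x : ↥V, f₂ x = 0 := by
        intro x
        obtain ⟨b', rfl⟩ := hgen x
        rw [map_smul, ← ht₂, h0, smul_zero]
      have := hall ↑s₂
      rw [hf₂, LinearMap.comp_apply, hπ₂s₂] at this
      exact (LinearEquiv.map_eq_zero_iff iso21).mp this
    -- apply the key fixed-vector lemma on the simple module S₁
    obtain ⟨c, hc2⟩ := keyfix φ hid hc hsimp ↥S₁ (hmf' ↥S₁ hS₁) t₁ t₂ ht₁fix ht₂fix ht₁0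
    have hpoint : ∀ x : ↥V, f₂ x = algebraMap ℂ B c • π₁ x := by
      intro x
      obtain ⟨b', rfl⟩ := hgen x
      rw [map_smul, map_smul, ← ht₂, ← ht₁, hc2, smul_smul, ← Algebra.commutes c b', mul_smul]
    have hzero : algebraMap ℂ B c • s₁ = 0 := by
      have h := hpoint ↑s₁
      rw [hπ₁s₁] at h
      rw [hf₂, LinearMap.comp_apply, hπ₂s₁, map_zero] at h
      exact h.symm
    by_cases hcc : c = 0
    · apply hs₂0
      have h := hpoint ↑s₂
      rw [hcc, map_zero, zero_smul] at h
      rw [hf₂, LinearMap.comp_apply, hπ₂s₂] at h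
      exact (LinearEquiv.map_eq_zero_iff iso21).mp h
    · apply hs₁0
      have : s₁ = algebraMap ℂ B c⁻¹ • (algebraMap ℂ B c • s₁) := by
        rw [smul_smul, ← map_mul, inv_mul_cancel₀ hcc, map_one, one_smul]
      rw [this, hzero, smul_zero]
  -- now V is simple; conclude with keyfix on V itself
  have hqbqV : q * b * q ∈ V := ⟨q * b, rfl⟩
  set t₂' : ↥V := ⟨q * b * q, hqbqV⟩ with ht₂'
  have hfix2 : φ p₀ • t₂' = t₂' := by
    apply Subtype.ext
    show p • (q * b * q) = q * b * q
    have h1 : q * b * q = q * (b * q) := mul_assoc q b q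
    rw [smul_eq_mul, h1, ← mul_assoc p q (b * q), hpq]
  obtain ⟨c, hc2⟩ := keyfix φ hid hc hsimp ↥V (hmf' ↥V hVsimple) qhat t₂' hpact hfix2 hqhat0
  refine ⟨c, ?_⟩
  have hval := congrArg Subtype.val hc2
  simp only [hqhat, ht₂'] at hval
  show q * b * q = c • q
  rw [show ((algebraMap ℂ B c • qhat : ↥V) : B) = algebraMap ℂ B c • q from rfl] at hval
  rw [hval, Algebra.smul_def, smul_eq_mul]

end crux



/-- Given a chain `ℂ = A₀ ⊆ A₁ ⊆ … ⊆ A_n = A` of semisimple subalgebras of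
a finite-dimensional algebra `A` with multiplicity-free restrictions, the Gelfand–Tsetlin
algebra `GZ_n` generated by the centers `Z(A₁), …, Z(A_n)` is a maximal commutative
subalgebra of `A_n = A`. -/
theorem gelfandTsetlin_maximal_commutative {A : Type} [Ring A] [Algebra ℂ A]
    [FiniteDimensional ℂ A] (n : ℕ) (Ach : ℕ → Subalgebra ℂ A)
    (hmono : Monotone Ach) (h0 : Ach 0 = ⊥) (htop : Ach n = ⊤)
    (hss : ∀ k ≤ n, IsSemisimpleRing (Ach k))
    (hmf : ∀ k, k < n →
      ∀ (M : Type) [AddCommGroup M] [Module (Ach (k + 1)) M],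
        IsSimpleModule (Ach (k + 1)) M →
        letI : Module (Ach k) M :=
          Module.compHom M (Subalgebra.inclusion (hmono (Nat.le_succ k))).toRingHom
        ∀ N₁ N₂ : Submodule (Ach k) M, IsSimpleModule (Ach k) N₁ →
          IsSimpleModule (Ach k) N₂ → Nonempty (N₁ ≃ₗ[(Ach k)] N₂) → N₁ = N₂) :
    (∀ x ∈ Algebra.adjoin ℂ
        (⋃ k ∈ Set.Iic n, {x : A | x ∈ Ach k ∧ ∀ y ∈ Ach k, x * y = y * x}),
      ∀ y ∈ Algebra.adjoin ℂ
        (⋃ k ∈ Set.Iic n, {x : A | x ∈ Ach k ∧ ∀ y ∈ Ach k, x * y = y * x}),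
        x * y = y * x) ∧
    ∀ C : Subalgebra ℂ A, (∀ x ∈ C, ∀ y ∈ C, x * y = y * x) →
      Algebra.adjoin ℂ
          (⋃ k ∈ Set.Iic n, {x : A | x ∈ Ach k ∧ ∀ y ∈ Ach k, x * y = y * x}) ≤ C →
      C = Algebra.adjoin ℂ
            (⋃ k ∈ Set.Iic n, {x : A | x ∈ Ach k ∧ ∀ y ∈ Ach k, x * y = y * x}) := by
  classical
  set S : Set A := ⋃ k ∈ Set.Iic n, {x : A | x ∈ Ach k ∧ ∀ y ∈ Ach k, x * y = y * x} with hSdef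
  -- pairwise commutativity of generators
  have hpair : ∀ a ∈ S, ∀ b ∈ S, a * b = b * a := by
    intro a ha b hb
    rw [hSdef, Set.mem_iUnion₂] at ha hb
    obtain ⟨j, hj, haj, hacomm⟩ := ha
    obtain ⟨k, hk, hbk, hbcomm⟩ := hb
    rcases le_total j k with h | h
    · exact (hbcomm a (hmono h haj)).symm
    · exact hacomm b (hmono h hbk)
  have hGcomm : ∀ x ∈ Algebra.adjoin ℂ S, ∀ y ∈ Algebra.adjoin ℂ S, x * y = y * x := by
    letI : CommRing ↥(Algebra.adjoin ℂ S) := Algebra.adjoinCommRingOfComm ℂ hpair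
    intro x hx y hy
    exact congrArg Subtype.val (mul_comm (⟨x, hx⟩ : ↥(Algebra.adjoin ℂ S)) ⟨y, hy⟩)
  -- the inductive family of idempotents
  have inv : ∀ k, k ≤ n → ∃ (m : ℕ) (p : Fin m → A),
      (∀ i, p i ∈ Ach k) ∧ (∀ i, p i ∈ Algebra.adjoin ℂ S) ∧
      (∀ i j, i ≠ j → p i * p j = 0) ∧ (∀ i, p i * p i = p i) ∧ ((∑ i, p i) = 1) ∧
      (∀ i, ∀ a ∈ Ach k, ∃ c : ℂ, p i * a * p i = c • p i) := by
    intro k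
    induction k with
    | zero =>
      intro hk
      refine ⟨1, fun _ => 1, fun i => Subalgebra.one_mem _, fun i => Subalgebra.one_mem _,
        fun i j hij => absurd (Subsingleton.elim i j) hij, fun i => one_mul 1, ?_, ?_⟩
      · simp
      · intro i a ha
        rw [h0, Algebra.mem_bot] at ha
        obtain ⟨c, hc⟩ := ha
        refine ⟨c, ?_⟩
        rw [← hc, one_mul, mul_one, Algebra.algebraMap_eq_smul_one]
    | succ k ih =>
      intro hk1
      have hk : k ≤ n := le_trans (Nat.le_succ k) hk1
      obtain ⟨m, p, hmem, hG, horth, hidem, hsum, hcorner⟩ := ih hk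
      haveI hssk : IsSemisimpleRing ↥(Ach k) := hss k hk
      haveI hssk1 : IsSemisimpleRing ↥(Ach (k + 1)) := hss (k + 1) hk1
      haveI : FiniteDimensional ℂ ↥(Ach (k + 1)) :=
        FiniteDimensional.of_injective (Subalgebra.val _).toLinearMap Subtype.val_injective
      obtain ⟨m₂, zf, hzcen, hzid, hzorth, hzsum, hziso⟩ := zfam (B := ↥(Ach (k + 1)))
      set zA : Fin m₂ → A := fun j => ((zf j : ↥(Ach (k + 1))) : A) with hzA
      have hzmem : ∀ j, zA j ∈ Ach (k + 1) := fun j => (zf j).2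
      have hzAcomm : ∀ j, ∀ y ∈ Ach (k + 1), zA j * y = y * zA j := by
        intro j y hy
        exact congrArg Subtype.val (hzcen j ⟨y, hy⟩)
      have hpmem' : ∀ i, p i ∈ Ach (k + 1) := fun i => hmono (Nat.le_succ k) (hmem i)
      have key : ∀ i i' j j', (p i * zA j) * (p i' * zA j') = (p i * p i') * (zA j * zA j') := by
        intro i i' j j'
        have hcz : zA j * p i' = p i' * zA j := hzAcomm j (p i') (hpmem' i')
        calc (p i * zA j) * (p i' * zA j') = p i * (zA j * (p i' * zA j')) := by
              rw [mul_assoc]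
        _ = p i * ((zA j * p i') * zA j') := by rw [mul_assoc]
        _ = p i * ((p i' * zA j) * zA j') := by rw [hcz]
        _ = p i * (p i' * (zA j * zA j')) := by rw [mul_assoc]
        _ = (p i * p i') * (zA j * zA j') := by rw [← mul_assoc]
      have hzmul : ∀ j j', zA j * zA j' = ((zf j * zf j' : ↥(Ach (k + 1))) : A) := fun j j' => rfl
      refine ⟨m * m₂, fun i => p (finProdFinEquiv.symm i).1 * zA (finProdFinEquiv.symm i).2,
        ?_, ?_, ?_, ?_, ?_, ?_⟩
      · intro i
        exact Subalgebra.mul_mem _ (hpmem' _) (hzmem _)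
      · intro i
        refine Subalgebra.mul_mem _ (hG _) (Algebra.subset_adjoin ?_)
        rw [hSdef]
        refine Set.mem_biUnion (show k + 1 ∈ Set.Iic n from hk1) ?_
        exact ⟨hzmem _, hzAcomm _⟩
      · intro i j hij
        rw [key]
        have hij' : (finProdFinEquiv.symm i) ≠ (finProdFinEquiv.symm j) := fun h =>
          hij (finProdFinEquiv.symm.injective h)
        by_cases h1 : (finProdFinEquiv.symm i).1 = (finProdFinEquiv.symm j).1
        · have h2 : (finProdFinEquiv.symm i).2 ≠ (finProdFinEquiv.symm j).2 := by
            intro h2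
            exact hij' (Prod.ext h1 h2)
          rw [hzmul, hzorth _ _ h2]
          simp
        · rw [horth _ _ h1]
          simp
      · intro i
        rw [key, hidem, hzmul, hzid]
      · rw [show (∑ i : Fin (m * m₂), p (finProdFinEquiv.symm i).1 * zA (finProdFinEquiv.symm i).2)
            = ∑ ij : Fin m × Fin m₂, p ij.1 * zA ij.2 from
          Fintype.sum_equiv finProdFinEquiv.symm _ _ (fun i => rfl)]
        rw [Fintype.sum_prod_type]
        rw [← Finset.sum_mul_sum]
        rw [hsum, one_mul]
        have : (∑ j, zA j) = ((∑ j, zf j : ↥(Ach (k + 1))) : A) := by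
          rw [AddSubmonoidClass.coe_finset_sum]
        rw [this, hzsum]
        rfl
      · rintro i a ha
        set i₁ := (finProdFinEquiv.symm i).1
        set j₁ := (finProdFinEquiv.symm i).2
        have hkn : k < n := Nat.lt_of_succ_le hk1
        set φ : ↥(Ach k) →ₐ[ℂ] ↥(Ach (k + 1)) := Subalgebra.inclusion (hmono (Nat.le_succ k))
          with hφ
        set p₀ : ↥(Ach k) := ⟨p i₁, hmem i₁⟩ with hp₀
        have hidp : p₀ * p₀ = p₀ := Subtype.ext (hidem i₁)
        have hcp : ∀ r : ↥(Ach k), ∃ c : ℂ, p₀ * r * p₀ = c • p₀ := by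
          intro r
          obtain ⟨c, hcval⟩ := hcorner i₁ r.1 r.2
          exact ⟨c, Subtype.ext hcval⟩
        obtain ⟨c, hcval⟩ := crux φ hidp hcp (hmf k hkn) (hzcen j₁) (hzid j₁) (hziso j₁)
          (⟨a, ha⟩ : ↥(Ach (k + 1)))
        refine ⟨c, ?_⟩
        have hval := congrArg Subtype.val hcval
        have hφval : ((φ p₀ : ↥(Ach (k + 1))) : A) = p i₁ := rfl
        exact hval
  -- final assembly
  obtain ⟨m, p, hmem, hG, horth, hidem, hsum, hcorner⟩ := inv n le_rfl
  refine ⟨hGcomm, ?_⟩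
  intro C hCcomm hGC
  refine le_antisymm ?_ hGC
  intro x hx
  have hx_eq : x = ∑ i, p i * x * p i := by
    have h2 : ∀ i, (∑ j, p i * x * p j) = p i * x * p i := by
      intro i
      refine Finset.sum_eq_single_of_mem i (Finset.mem_univ i) ?_
      intro j _ hji
      have hxp : x * p j = p j * x := hCcomm x hx (p j) (hGC (hG j))
      calc p i * x * p j = p i * (x * p j) := by rw [mul_assoc]
      _ = p i * (p j * x) := by rw [hxp]
      _ = (p i * p j) * x := by rw [← mul_assoc]
      _ = 0 := by rw [horth i j (Ne.symm hji), zero_mul]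
    have h1 : (∑ i, p i) * x * (∑ i, p i) = ∑ i, ∑ j, p i * x * p j := by
      rw [Finset.sum_mul, Finset.sum_mul_sum]
    calc x = (∑ i, p i) * x * (∑ i, p i) := by rw [hsum, one_mul, mul_one]
    _ = ∑ i, ∑ j, p i * x * p j := h1
    _ = ∑ i, p i * x * p i := Finset.sum_congr rfl (fun i _ => h2 i)
  have hxtop : x ∈ Ach n := by rw [htop]; exact Algebra.mem_top
  have hterm : ∀ i, p i * x * p i ∈ Algebra.adjoin ℂ S := by
    intro i
    obtain ⟨c, hcv⟩ := hcorner i x hxtop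
    rw [hcv]
    exact Subalgebra.smul_mem _ (hG i) c
  rw [hx_eq]
  exact Subalgebra.sum_mem _ (fun i _ => hterm i)
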